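/- Let S, T ⊆ H be disjoint with S isotropic and T symplectic. Then N_{S,T}(ℤ) := N_{S,T}(ℝ) ∩ {integer matrices} is a cocompact subgroup of N_{S,T}(ℝ): there is a compact set K of 2p×2p real matrices such that every M ∈ N_{S,T}(ℝ) can be written M = k·γ with k ∈ K ∩ N_{S,T}(ℝ) and γ ∈ N_{S,T}(ℤ). -/

import Mathlib

open Matrix

/-- Index type for `2p × 2p` matrices: `Sum.inl i` is the signed index `i+1`
(so `z_{i+1} = e_{i+1}`) and `Sum.inr i` is the signed index `−(i+1)` (so
`z_{−(i+1)} = e_{p+i+1}`).  Negation of signed indices is `Sum.swap`. -/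
abbrev Idx (p : ℕ) := Fin p ⊕ Fin p

/-- The standard basis vector `z_h` of `ℝ^{2p}`. -/
def zvec (p : ℕ) (h : Idx p) : Idx p → ℝ := Pi.single h 1

/-- The standard symplectic matrix `J = [[0, I], [-I, 0]]`. -/
def Jmat (p : ℕ) : Matrix (Idx p) (Idx p) ℝ := Matrix.fromBlocks 0 1 (-1) 0

/-- The real symplectic group `Sp(2p;ℝ) = {M | MᵀJM = J}`. -/
def SpR (p : ℕ) : Set (Matrix (Idx p) (Idx p) ℝ) :=
  {M | Mᵀ * Jmat p * M = Jmat p}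

/-- `ℝ^A`: the span of the standard basis vectors `z_a`, `a ∈ A`. -/
def RSpan (p : ℕ) (A : Finset (Idx p)) : Submodule ℝ (Idx p → ℝ) :=
  Submodule.span ℝ {v | ∃ a ∈ A, v = zvec p a}

/-- `S ⊆ H` is isotropic if it contains no pair `{h, −h}`. -/
def IsIsotropic {p : ℕ} (S : Finset (Idx p)) : Prop := ∀ h ∈ S, Sum.swap h ∉ S

/-- `T ⊆ H` is symplectic if it is closed under negation. -/
def IsSymplecticSet {p : ℕ} (T : Finset (Idx p)) : Prop := ∀ h ∈ T, Sum.swap h ∈ T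

/-- The unipotent radical `N_{S,T}(ℝ)`: symplectic matrices fixing `z_s` for `s ∈ S`,
fixing `z_h` for `h ∉ S ∪ −S ∪ T`, and with `(M−I)z_t ∈ ℝ^{S∪−S}` for `t ∈ T`. -/
def NR (p : ℕ) (S T : Finset (Idx p)) : Set (Matrix (Idx p) (Idx p) ℝ) :=
  {M | M ∈ SpR p ∧
    (∀ s ∈ S, M *ᵥ zvec p s = zvec p s) ∧
    (∀ h : Idx p, h ∉ S → h ∉ S.image Sum.swap → h ∉ T → M *ᵥ zvec p h = zvec p h) ∧
    (∀ t ∈ T, (M - 1) *ᵥ zvec p t ∈ RSpan p (S ∪ S.image Sum.swap))}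

namespace NZaux
variable {p : ℕ}

/-- sign: +1 on first block, -1 on second. -/
def sg (h : Idx p) : ℝ := Sum.elim (fun _ => 1) (fun _ => -1) h
/-- Kronecker delta. -/
def dd (h h' : Idx p) : ℝ := if h = h' then 1 else 0
/-- linearizing index -/
def ix (h : Idx p) : ℕ := Sum.elim Fin.val (fun i => p + i.val) h

lemma sg_swap (h : Idx p) : sg (Sum.swap h) = -sg h := by cases h <;> simp [sg]
lemma sg_sq (h : Idx p) : sg h * sg h = 1 := by cases h <;> norm_num [sg]
lemma abs_sg (h : Idx p) : |sg h| = 1 := by cases h <;> norm_num [sg]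
lemma ix_inj : Function.Injective (ix (p := p)) := by
  rintro (a | a) (b | b) h <;> simp [ix] at h
  · exact congrArg Sum.inl (Fin.ext h)
  · exact absurd h (by have := a.isLt; omega)
  · exact absurd h (by have := b.isLt; omega)
  · exact congrArg Sum.inr (Fin.ext (by omega))

lemma swap_inj : Function.Injective (Sum.swap : Idx p → Idx p) :=
  Function.LeftInverse.injective Sum.swap_swap

lemma J_apply (a b : Idx p) : Jmat p a b = if b = Sum.swap a then sg a else 0 := by
  rcases a with a | a <;> rcases b with b | b <;>
    simp [Jmat, Matrix.fromBlocks, sg, Matrix.one_apply, eq_comm, neg_apply, apply_ite]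


lemma pair_expand (M : Matrix (Idx p) (Idx p) ℝ) (a b : Idx p) :
    (Mᵀ * Jmat p * M) a b = ∑ h, sg h * M h a * M (Sum.swap h) b := by
  simp only [Matrix.mul_apply, Matrix.transpose_apply, Finset.sum_mul]
  rw [Finset.sum_comm]
  refine Finset.sum_congr rfl fun h _ => ?_
  rw [Finset.sum_eq_single (Sum.swap h)]
  · rw [J_apply, if_pos rfl]; ring
  · intro j _ hj; rw [J_apply]; simp [hj]
  · simp

lemma sum_single_idx (f : Idx p → ℝ) (a : Idx p) (h0 : ∀ h, h ≠ a → f h = 0) :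
    ∑ h, f h = f a := Fintype.sum_eq_single a h0

lemma sum_split1 (f : Idx p → ℝ) (A : Finset (Idx p)) (a : Idx p) (ha : a ∉ A)
    (h0 : ∀ h, h ∉ A → h ≠ a → f h = 0) :
    ∑ h, f h = f a + ∑ h ∈ A, f h := by
  rw [← Finset.sum_insert ha]
  refine (Finset.sum_subset (Finset.subset_univ _) ?_).symm
  intro h _ hh
  simp only [Finset.mem_insert, not_or] at hh
  exact h0 h hh.2 hh.1

lemma sum_split2 (f : Idx p → ℝ) (A B : Finset (Idx p)) (a : Idx p) (ha : a ∉ A)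
    (hb : a ∉ B) (hAB : Disjoint A B)
    (h0 : ∀ h, h ∉ A → h ∉ B → h ≠ a → f h = 0) :
    ∑ h, f h = f a + ∑ h ∈ A, f h + ∑ h ∈ B, f h := by
  have key : ∑ h, f h = ∑ h ∈ insert a (A ∪ B), f h := by
    refine (Finset.sum_subset (Finset.subset_univ _) ?_).symm
    intro h _ hh
    simp only [Finset.mem_insert, Finset.mem_union, not_or] at hh
    exact h0 h hh.2.1 hh.2.2 hh.1
  rw [key, Finset.sum_insert (by simp [ha, hb]), Finset.sum_union hAB, add_assoc]

lemma sum_dd_swap (A : Finset (Idx p)) (g : Idx p → ℝ) (b : Idx p) :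
    ∑ x ∈ A, g x * dd (Sum.swap x) b = if Sum.swap b ∈ A then g (Sum.swap b) else 0 := by
  have h1 : ∀ x, dd (Sum.swap x) b = if x = Sum.swap b then 1 else 0 := by
    intro x
    unfold dd
    refine if_congr ?_ rfl rfl
    constructor
    · rintro rfl; rw [Sum.swap_swap]
    · rintro rfl; rw [Sum.swap_swap]
  simp only [h1, mul_ite, mul_one, mul_zero]
  exact Finset.sum_ite_eq' A (Sum.swap b) g

lemma sum_dd_left (A : Finset (Idx p)) (g : Idx p → ℝ) (h : Idx p) :
    ∑ x ∈ A, dd h x * g x = if h ∈ A then g h else 0 := by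
  simp only [dd, ite_mul, one_mul, zero_mul]
  exact Finset.sum_ite_eq A h g

lemma sumT {T : Finset (Idx p)} (hT : IsSymplecticSet T) (G : Idx p → ℝ) :
    ∑ t ∈ T, G t = ∑ t ∈ T, G (Sum.swap t) := by
  refine Finset.sum_nbij' (fun t => Sum.swap t) (fun t => Sum.swap t) ?_ ?_ ?_ ?_ ?_
  · intro a haT; exact hT a haT
  · intro a haT; exact hT a haT
  · intro a _; exact Sum.swap_swap a
  · intro a _; exact Sum.swap_swap a
  · intro a _; rw [Sum.swap_swap]

lemma sumT_sg {T : Finset (Idx p)} (hT : IsSymplecticSet T) (F : Idx p → ℝ) :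
    ∑ t ∈ T, sg t * F (Sum.swap t) = -∑ t ∈ T, sg t * F t := by
  rw [sumT hT (fun t => sg t * F (Sum.swap t))]
  rw [← Finset.sum_neg_distrib]
  refine Finset.sum_congr rfl fun t _ => ?_
  rw [sg_swap, Sum.swap_swap]
  ring


lemma dd_goal (a b : Idx p) (c : ℝ) :
    c * dd (Sum.swap a) b = if b = Sum.swap a then c else 0 := by
  unfold dd
  rcases eq_or_ne b (Sum.swap a) with rfl | h
  · rw [if_pos rfl, if_pos rfl, mul_one]
  · rw [if_neg (fun e => h e.symm), if_neg h, mul_zero]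

lemma red1 (M : Matrix (Idx p) (Idx p) ℝ) (a b : Idx p)
    (hcol : ∀ h, M h a = dd h a) :
    ∑ h, sg h * M h a * M (Sum.swap h) b = sg a * M (Sum.swap a) b := by
  have := sum_single_idx (fun h => sg h * M h a * M (Sum.swap h) b) a ?_
  · rw [this, hcol a]; unfold dd; rw [if_pos rfl]; ring
  · intro h hne
    beta_reduce
    rw [hcol h]; unfold dd; rw [if_neg hne]; ring

lemma red2 (S : Finset (Idx p)) (M : Matrix (Idx p) (Idx p) ℝ) (a b : Idx p)
    (haS : a ∉ S) (hcol : ∀ h, h ∉ S → M h a = dd h a) :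
    ∑ h, sg h * M h a * M (Sum.swap h) b
      = sg a * M (Sum.swap a) b + ∑ σ ∈ S, sg σ * M σ a * M (Sum.swap σ) b := by
  have := sum_split1 (fun h => sg h * M h a * M (Sum.swap h) b) S a haS ?_
  · rw [this]
    congr 1
    beta_reduce
    rw [hcol a haS]; unfold dd; rw [if_pos rfl]; ring
  · intro h hh hne
    beta_reduce
    rw [hcol h hh]; unfold dd; rw [if_neg hne]; ring

lemma red3 (S T : Finset (Idx p)) (hdisj : Disjoint S T) (M : Matrix (Idx p) (Idx p) ℝ)
    (a b : Idx p) (haS : a ∉ S) (haT : a ∉ T)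
    (hcol : ∀ h, h ∉ S → h ∉ T → M h a = dd h a) :
    ∑ h, sg h * M h a * M (Sum.swap h) b
      = sg a * M (Sum.swap a) b + ∑ σ ∈ S, sg σ * M σ a * M (Sum.swap σ) b
          + ∑ t ∈ T, sg t * M t a * M (Sum.swap t) b := by
  have := sum_split2 (fun h => sg h * M h a * M (Sum.swap h) b) S T a haS haT hdisj ?_
  · rw [this]
    congr 2
    beta_reduce
    rw [hcol a haS haT]; unfold dd; rw [if_pos rfl]; ring
  · intro h h1 h2 hne
    beta_reduce
    rw [hcol h h1 h2]; unfold dd; rw [if_neg hne]; ring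

/-- entrywise description of elements of `NR`. -/
def PP (S T : Finset (Idx p)) (M : Matrix (Idx p) (Idx p) ℝ) : Prop :=
  (∀ h h', h' ∈ S → M h h' = dd h h') ∧
  (∀ h h', h' ∉ S → h' ∉ T → Sum.swap h' ∉ S → M h h' = dd h h') ∧
  (∀ h t, t ∈ T → h ∉ S → M h t = dd h t) ∧
  (∀ h s, s ∈ S → h ∉ S → h ∉ T → M h (Sum.swap s) = dd h (Sum.swap s)) ∧
  (∀ s t, s ∈ S → t ∈ T → M (Sum.swap t) (Sum.swap s) = -(sg t * sg s) * M s t) ∧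
  (∀ s s', s ∈ S → s' ∈ S →
    sg s * M s (Sum.swap s') - sg s' * M s' (Sum.swap s)
      = sg s * sg s' * ∑ t ∈ T, sg t * M s' (Sum.swap t) * M s t)

section Facts
variable {S T : Finset (Idx p)}

lemma fT (hdisj : Disjoint S T) {x : Idx p} (hx : x ∈ T) : x ∉ S :=
  fun hs => Finset.disjoint_left.mp hdisj hs hx

lemma fS (hdisj : Disjoint S T) {x : Idx p} (hx : x ∈ S) : x ∉ T :=
  fun ht => Finset.disjoint_left.mp hdisj hx ht

lemma fSw (hS : IsIsotropic S) {x : Idx p} (hx : x ∈ S) : Sum.swap x ∉ S := hS x hx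

lemma fSwT (hdisj : Disjoint S T) (hT : IsSymplecticSet T) {x : Idx p} (hx : x ∈ S) :
    Sum.swap x ∉ T := by
  intro ht
  have := hT _ ht
  rw [Sum.swap_swap] at this
  exact fS hdisj hx this

lemma fTSw (hT : IsSymplecticSet T) {x : Idx p} (hx : x ∈ T) : Sum.swap x ∈ T := hT x hx

lemma fTS (hdisj : Disjoint S T) (hT : IsSymplecticSet T) {x : Idx p} (hx : x ∈ T) :
    Sum.swap x ∉ S := fun hs => fSwT hdisj hT hs (by rw [Sum.swap_swap]; exact hx)

lemma fnT (hT : IsSymplecticSet T) {x : Idx p} (hx : x ∉ T) : Sum.swap x ∉ T := by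
  intro h
  have := hT _ h
  rw [Sum.swap_swap] at this
  exact hx this

lemma PP.rowfix {M : Matrix (Idx p) (Idx p) ℝ} (hM : PP S T M) {h : Idx p}
    (h1 : h ∉ S) (h2 : h ∉ T) (b : Idx p) : M h b = dd h b := by
  by_cases hb1 : b ∈ S
  · exact hM.1 _ _ hb1
  by_cases hb2 : b ∈ T
  · exact hM.2.2.1 _ _ hb2 h1
  by_cases hb3 : Sum.swap b ∈ S
  · have e : b = Sum.swap (Sum.swap b) := (Sum.swap_swap b).symm
    rw [e]
    exact hM.2.2.2.1 _ _ hb3 h1 h2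
  · exact hM.2.1 _ _ hb1 hb2 hb3

lemma PP.rowT {M : Matrix (Idx p) (Idx p) ℝ} (hdisj : Disjoint S T)
    (hM : PP S T M) {t : Idx p} (ht : t ∈ T) {b : Idx p}
    (hb : Sum.swap b ∉ S) : M t b = dd t b := by
  by_cases hb1 : b ∈ S
  · exact hM.1 _ _ hb1
  by_cases hb2 : b ∈ T
  · exact hM.2.2.1 _ _ hb2 (fT hdisj ht)
  · exact hM.2.1 _ _ hb1 hb2 hb

lemma PP.p5' {M : Matrix (Idx p) (Idx p) ℝ} (hT : IsSymplecticSet T)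
    (hM : PP S T M) {s t : Idx p} (hs : s ∈ S) (ht : t ∈ T) :
    M t (Sum.swap s) = sg t * sg s * M s (Sum.swap t) := by
  have h5 := hM.2.2.2.2.1 s (Sum.swap t) hs (fTSw hT ht)
  rw [Sum.swap_swap] at h5
  rw [h5, sg_swap]
  ring

end Facts

lemma Q_antisym {T : Finset (Idx p)} (hT : IsSymplecticSet T)
    (u : Idx p → Idx p → ℝ) (s s' : Idx p) :
    ∑ t ∈ T, sg t * u s' (Sum.swap t) * u s t
      = -∑ t ∈ T, sg t * u s (Sum.swap t) * u s' t := by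
  have h1 : ∑ t ∈ T, sg t * u s (Sum.swap t) * u s' t
      = ∑ t ∈ T, -(sg t * u s' (Sum.swap t) * u s t) := by
    rw [sumT hT (fun t => sg t * u s (Sum.swap t) * u s' t)]
    refine Finset.sum_congr rfl fun t _ => ?_
    rw [sg_swap, Sum.swap_swap]
    ring
  rw [h1, Finset.sum_neg_distrib, neg_neg]

lemma mulVec_z (M : Matrix (Idx p) (Idx p) ℝ) (a : Idx p) :
    M *ᵥ zvec p a = fun h => M h a := by
  funext h
  simp only [zvec, Matrix.mulVec, dotProduct, Pi.single_apply, mul_ite, mul_one, mul_zero]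
  rw [Finset.sum_ite_eq' Finset.univ a (M h), if_pos (Finset.mem_univ a)]

lemma RSpan_vanish {A : Finset (Idx p)} {v : Idx p → ℝ} (hv : v ∈ RSpan p A)
    {h : Idx p} (hh : h ∉ A) : v h = 0 := by
  have hle : RSpan p A ≤ LinearMap.ker (LinearMap.proj h :
      ((Idx p → ℝ) →ₗ[ℝ] ℝ)) := by
    rw [RSpan, Submodule.span_le]
    rintro w ⟨a, ha, rfl⟩
    simp only [SetLike.mem_coe, LinearMap.mem_ker, LinearMap.proj_apply, zvec,
      Pi.single_apply]
    rw [if_neg fun e => hh (by rw [e]; exact ha)]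
  exact hle hv

lemma mem_RSpan_of_supp {A : Finset (Idx p)} {v : Idx p → ℝ}
    (hv : ∀ h, h ∉ A → v h = 0) : v ∈ RSpan p A := by
  have hrep : v = ∑ a ∈ A, v a • zvec p a := by
    funext h
    rw [Finset.sum_apply]
    simp only [Pi.smul_apply, zvec, Pi.single_apply, smul_eq_mul, mul_ite, mul_one, mul_zero]
    rw [Finset.sum_ite_eq A h v]
    by_cases hh : h ∈ A
    · rw [if_pos hh]
    · rw [if_neg hh, hv h hh]
  rw [hrep]
  exact Submodule.sum_mem _ fun a ha =>
    Submodule.smul_mem _ _ (Submodule.subset_span ⟨a, ha, rfl⟩)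


lemma sum_rows_dd (A : Finset (Idx p)) (g : Idx p → ℝ) (M : Matrix (Idx p) (Idx p) ℝ)
    (b : Idx p) (hrow : ∀ x ∈ A, M (Sum.swap x) b = dd (Sum.swap x) b) :
    ∑ x ∈ A, g x * M (Sum.swap x) b = if Sum.swap b ∈ A then g (Sum.swap b) else 0 := by
  rw [← sum_dd_swap A g b]
  exact Finset.sum_congr rfl fun x hx => by rw [hrow x hx]

lemma PP_spr {S T : Finset (Idx p)} (hS : IsIsotropic S) (hT : IsSymplecticSet T)
    (hdisj : Disjoint S T) {M : Matrix (Idx p) (Idx p) ℝ} (hM : PP S T M) :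
    Mᵀ * Jmat p * M = Jmat p := by
  obtain ⟨P1, P2, P3, P4, P5, P6⟩ := hM
  have hM' : PP S T M := ⟨P1, P2, P3, P4, P5, P6⟩
  apply Matrix.ext
  intro a b
  rw [pair_expand, J_apply]
  by_cases haS : a ∈ S
  · rw [red1 M a b (fun h => P1 h a haS)]
    rw [hM'.rowfix (fSw hS haS) (fSwT hdisj hT haS) b]
    exact dd_goal a b (sg a)
  by_cases haT : a ∈ T
  · rw [red2 S M a b haS (fun h hh => P3 h a haT hh)]
    rw [sum_rows_dd S (fun x => sg x * M x a) M b
      (fun σ hσ => hM'.rowfix (fSw hS hσ) (fSwT hdisj hT hσ) b)]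
    by_cases hbS : Sum.swap b ∈ S
    · rw [if_pos hbS]
      have h5 : M (Sum.swap a) b = -(sg a * sg (Sum.swap b)) * M (Sum.swap b) a := by
        conv_lhs => rw [(Sum.swap_swap b).symm]
        exact P5 (Sum.swap b) a hbS haT
      rw [h5]
      have hne : b ≠ Sum.swap a := by
        intro e
        rw [e, Sum.swap_swap] at hbS
        exact (fT hdisj haT) hbS
      rw [if_neg hne]
      linear_combination (-(sg (Sum.swap b) * M (Sum.swap b) a)) * (sg_sq a)
    · rw [if_neg hbS, hM'.rowT hdisj (fTSw hT haT) hbS, add_zero]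
      exact dd_goal a b (sg a)
  by_cases hswS : Sum.swap a ∈ S
  · obtain ⟨s, hs, rfl⟩ : ∃ s, s ∈ S ∧ a = Sum.swap s :=
      ⟨Sum.swap a, hswS, (Sum.swap_swap a).symm⟩
    rw [red3 S T hdisj M (Sum.swap s) b haS haT (fun h h1 h2 => P4 h s hs h1 h2)]
    rw [sum_rows_dd S (fun x => sg x * M x (Sum.swap s)) M b
      (fun σ hσ => hM'.rowfix (fSw hS hσ) (fSwT hdisj hT hσ) b)]
    rw [Sum.swap_swap, sg_swap]
    by_cases hbS : Sum.swap b ∈ S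
    · have hbne : b ≠ s := by
        intro e
        rw [e] at hbS
        exact (fSw hS hs) hbS
      rw [if_neg hbne, if_pos hbS]
      obtain ⟨s', hs', rfl⟩ : ∃ s', s' ∈ S ∧ b = Sum.swap s' :=
        ⟨Sum.swap b, hbS, (Sum.swap_swap b).symm⟩
      rw [Sum.swap_swap] at hbS ⊢
      have hterm : ∀ t ∈ T, sg t * M t (Sum.swap s) * M (Sum.swap t) (Sum.swap s')
          = -(sg s * sg s') * (sg t * M s (Sum.swap t) * M s' t) := by
        intro t ht
        rw [hM'.p5' hT hs ht, P5 s' t hs' ht]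
        linear_combination (-(sg s * sg s' * M s (Sum.swap t) * M s' t * sg t)) * (sg_sq t)
      rw [Finset.sum_congr rfl hterm, ← Finset.mul_sum,
        Q_antisym hT (fun a b => M a b) s' s]
      linear_combination -(P6 s s' hs hs')
    · rw [if_neg hbS]
      have hTsum : ∑ t ∈ T, sg t * M t (Sum.swap s) * M (Sum.swap t) b
          = if Sum.swap b ∈ T then sg (Sum.swap b) * M (Sum.swap b) (Sum.swap s) else 0 :=
        sum_rows_dd T (fun x => sg x * M x (Sum.swap s)) M b
          (fun t ht => hM'.rowT hdisj (fTSw hT ht) hbS)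
      rw [hTsum]
      by_cases hbT : b ∈ T
      · rw [if_pos (fTSw hT hbT)]
        have h5b : M (Sum.swap b) (Sum.swap s) = -(sg b * sg s) * M s b := P5 s b hs hbT
        rw [h5b, sg_swap]
        have hbne : b ≠ s := fun e => (fT hdisj hbT) (e ▸ hs)
        rw [if_neg hbne]
        linear_combination (sg s * M s b) * (sg_sq b)
      · rw [if_neg (fnT hT hbT), add_zero, add_zero]
        have hrow : M s b = dd s b := by
          by_cases hbS2 : b ∈ S
          · exact P1 s b hbS2
          · exact P2 s b hbS2 hbT hbS
        rw [hrow]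
        unfold dd
        rcases eq_or_ne b s with rfl | hne
        · rw [if_pos rfl, if_pos rfl]; ring
        · rw [if_neg (fun e => hne e.symm), if_neg hne, mul_zero]
  · rw [red1 M a b (fun h => P2 h a haS haT hswS)]
    rw [hM'.rowfix hswS (fnT hT haT) b]
    exact dd_goal a b (sg a)


lemma sg_ne (h : Idx p) : sg h ≠ 0 := by cases h <;> norm_num [sg]

lemma zvec_eq_dd (a h : Idx p) : zvec p a h = dd h a := by
  simp [zvec, Pi.single_apply, dd]

lemma PP_imp_NR {S T : Finset (Idx p)} (hS : IsIsotropic S) (hT : IsSymplecticSet T)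
    (hdisj : Disjoint S T) {M : Matrix (Idx p) (Idx p) ℝ} (hM : PP S T M) :
    M ∈ NR p S T := by
  refine ⟨PP_spr hS hT hdisj hM, ?_, ?_, ?_⟩
  · intro s hs
    rw [mulVec_z]
    funext h
    rw [hM.1 h s hs, zvec_eq_dd]
  · intro h h1 h2 h3
    rw [mulVec_z]
    funext h'
    have hsw : Sum.swap h ∉ S := fun hc =>
      h2 (Finset.mem_image.mpr ⟨_, hc, Sum.swap_swap h⟩)
    rw [hM.2.1 h' h h1 h3 hsw, zvec_eq_dd]
  · intro t ht
    refine mem_RSpan_of_supp fun h hh => ?_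
    have h1 : h ∉ S := fun hc => hh (Finset.mem_union_left _ hc)
    rw [mulVec_z (M - 1) t]
    simp only [Matrix.sub_apply, Matrix.one_apply]
    rw [hM.2.2.1 h t ht h1]
    simp [dd]

lemma NR_imp_PP {S T : Finset (Idx p)} (hS : IsIsotropic S) (hT : IsSymplecticSet T)
    (hdisj : Disjoint S T) {M : Matrix (Idx p) (Idx p) ℝ} (hM : M ∈ NR p S T) :
    PP S T M := by
  obtain ⟨hsp, hfix, hfree, hcolT⟩ := hM
  have P1 : ∀ h h', h' ∈ S → M h h' = dd h h' := by
    intro h h' hh'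
    have e := hfix h' hh'
    rw [mulVec_z] at e
    have := congrFun e h
    beta_reduce at this
    rw [this, zvec_eq_dd]
  have P2 : ∀ h h', h' ∉ S → h' ∉ T → Sum.swap h' ∉ S → M h h' = dd h h' := by
    intro h h' h1 h2 h3
    have himg : h' ∉ S.image Sum.swap := by
      intro hc
      obtain ⟨x, hx, ex⟩ := Finset.mem_image.mp hc
      apply h3
      rw [← ex, Sum.swap_swap]
      exact hx
    have e := hfree h' h1 himg h2
    rw [mulVec_z] at e
    have := congrFun e h
    beta_reduce at this
    rw [this, zvec_eq_dd]
  have colT : ∀ t ∈ T, ∀ h, h ∉ S → Sum.swap h ∉ S → M h t = dd h t := by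
    intro t ht h h1 h2
    have hmem := hcolT t ht
    have hv := RSpan_vanish hmem (h := h) ?_
    · rw [mulVec_z (M - 1) t] at hv
      simp only at hv
      simp only [Matrix.sub_apply, Matrix.one_apply] at hv
      unfold dd
      linarith
    · intro hc
      rcases Finset.mem_union.mp hc with hc | hc
      · exact h1 hc
      · obtain ⟨x, hx, ex⟩ := Finset.mem_image.mp hc
        apply h2
        rw [← ex, Sum.swap_swap]
        exact hx
  have hpair : ∀ a b, ∑ h, sg h * M h a * M (Sum.swap h) b
      = if b = Sum.swap a then sg a else 0 := by
    intro a b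
    rw [← pair_expand M a b, hsp, J_apply]
  have P3 : ∀ h t, t ∈ T → h ∉ S → M h t = dd h t := by
    intro h t ht h1
    by_cases h2 : Sum.swap h ∈ S
    · have hp := hpair (Sum.swap h) t
      rw [red1 M (Sum.swap h) t (fun x => P1 x (Sum.swap h) h2), Sum.swap_swap] at hp
      have hth : t ≠ h := by
        rintro rfl
        exact (fTS hdisj hT ht) h2
      rw [if_neg hth] at hp
      have hz : M h t = 0 := by
        rcases mul_eq_zero.mp hp with hc | hc
        · exact absurd hc (sg_ne _)
        · exact hc
      rw [hz]
      unfold dd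
      rw [if_neg (fun e => hth e.symm)]
    · exact colT t ht h h1 h2
  have P4 : ∀ h s, s ∈ S → h ∉ S → h ∉ T → M h (Sum.swap s) = dd h (Sum.swap s) := by
    intro h s hs h1 h2
    have hcol : ∀ x, M x (Sum.swap h) = dd x (Sum.swap h) := by
      intro x
      by_cases h3 : Sum.swap h ∈ S
      · exact P1 x (Sum.swap h) h3
      · exact P2 x (Sum.swap h) h3 (fnT hT h2) (by rw [Sum.swap_swap]; exact h1)
    have hp := hpair (Sum.swap h) (Sum.swap s)
    rw [red1 M (Sum.swap h) (Sum.swap s) hcol, Sum.swap_swap] at hp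
    unfold dd
    rcases eq_or_ne h (Sum.swap s) with rfl | hne
    · rw [if_pos rfl] at hp
      rw [if_pos rfl]
      have := mul_left_cancel₀ (sg_ne _) (hp.trans (mul_one _).symm)
      exact this
    · rw [if_neg (fun e => hne e.symm)] at hp
      rw [if_neg hne]
      rcases mul_eq_zero.mp hp with hc | hc
      · exact absurd hc (sg_ne _)
      · exact hc
  have P5 : ∀ s t, s ∈ S → t ∈ T → M (Sum.swap t) (Sum.swap s)
      = -(sg t * sg s) * M s t := by
    intro s t hs ht
    have hp := hpair t (Sum.swap s)
    rw [red2 S M t (Sum.swap s) (fT hdisj ht) (fun h hh => P3 h t ht hh)] at hp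
    rw [sum_rows_dd S (fun x => sg x * M x t) M (Sum.swap s)
      (fun σ hσ => P4 (Sum.swap σ) s hs (fSw hS hσ) (fSwT hdisj hT hσ))] at hp
    rw [Sum.swap_swap s, if_pos hs] at hp
    have hne : Sum.swap s ≠ Sum.swap t := fun e => (fS hdisj hs) (by
      have : s = t := swap_inj e
      rw [this]; exact ht)
    rw [if_neg hne] at hp
    linear_combination sg t * hp - M (Sum.swap t) (Sum.swap s) * sg_sq t
  have hP5' : ∀ s t, s ∈ S → t ∈ T → M t (Sum.swap s) = sg t * sg s * M s (Sum.swap t) := by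
    intro s t hs ht
    have h5 := P5 s (Sum.swap t) hs (fTSw hT ht)
    rw [Sum.swap_swap] at h5
    rw [h5, sg_swap]
    ring
  refine ⟨P1, P2, P3, P4, P5, ?_⟩
  intro s s' hs hs'
  have hp := hpair (Sum.swap s') (Sum.swap s)
  rw [red3 S T hdisj M (Sum.swap s') (Sum.swap s) (fSw hS hs') (fSwT hdisj hT hs')
    (fun h h1 h2 => P4 h s' hs' h1 h2)] at hp
  rw [sum_rows_dd S (fun x => sg x * M x (Sum.swap s')) M (Sum.swap s)
    (fun σ hσ => P4 (Sum.swap σ) s hs (fSw hS hσ) (fSwT hdisj hT hσ))] at hp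
  rw [Sum.swap_swap s, Sum.swap_swap s', if_pos hs, sg_swap] at hp
  have hterm : ∀ t ∈ T, sg t * M t (Sum.swap s') * M (Sum.swap t) (Sum.swap s)
      = -(sg s * sg s') * (sg t * M s' (Sum.swap t) * M s t) := by
    intro t ht
    rw [hP5' s' t hs' ht, P5 s t hs ht]
    linear_combination (-(sg s * sg s' * M s' (Sum.swap t) * M s t * sg t)) * (sg_sq t)
  rw [Finset.sum_congr rfl hterm, ← Finset.mul_sum] at hp
  have hne : Sum.swap s ≠ s' := fun e => (fSw hS hs') (by rw [← e, Sum.swap_swap]; exact hs)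
  rw [if_neg hne] at hp
  linear_combination hp


def Qu (T : Finset (Idx p)) (u : Idx p → Idx p → ℝ) (s h : Idx p) : ℝ :=
  ∑ t ∈ T, sg t * u h (Sum.swap t) * u s t

def AA (T : Finset (Idx p)) (u f : Idx p → Idx p → ℝ) (h s : Idx p) : ℝ :=
  if ix h ≤ ix s then f h s else sg h * sg s * f s h - sg s * Qu T u s h

def bld (S T : Finset (Idx p)) (u f : Idx p → Idx p → ℝ) : Matrix (Idx p) (Idx p) ℝ :=
  Matrix.of fun h h' =>
    if h' ∈ S then dd h h'
    else if h' ∈ T then (if h ∈ S then u h h' else dd h h')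
    else if Sum.swap h' ∈ S then
      (if h ∈ S then AA T u f h (Sum.swap h')
       else if h ∈ T then sg h * sg (Sum.swap h') * u (Sum.swap h') (Sum.swap h)
       else dd h h')
    else dd h h'

section Bld
variable {S T : Finset (Idx p)} {u f : Idx p → Idx p → ℝ}

lemma bld_S (h : Idx p) {h' : Idx p} (hh' : h' ∈ S) : bld S T u f h h' = dd h h' := by
  unfold bld
  rw [Matrix.of_apply, if_pos hh']

lemma bld_T (hdisj : Disjoint S T) (h : Idx p) {t : Idx p} (ht : t ∈ T) :
    bld S T u f h t = if h ∈ S then u h t else dd h t := by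
  unfold bld
  rw [Matrix.of_apply, if_neg (fT hdisj ht), if_pos ht]

lemma bld_mS (hS : IsIsotropic S) (hT : IsSymplecticSet T) (hdisj : Disjoint S T)
    (h : Idx p) {s : Idx p} (hs : s ∈ S) :
    bld S T u f h (Sum.swap s)
      = if h ∈ S then AA T u f h s
        else if h ∈ T then sg h * sg s * u s (Sum.swap h)
        else dd h (Sum.swap s) := by
  unfold bld
  rw [Matrix.of_apply, if_neg (fSw hS hs), if_neg (fSwT hdisj hT hs),
    if_pos (by rw [Sum.swap_swap]; exact hs), Sum.swap_swap]

lemma bld_fix (h : Idx p) {h' : Idx p} (h1 : h' ∉ S) (h2 : h' ∉ T)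
    (h3 : Sum.swap h' ∉ S) : bld S T u f h h' = dd h h' := by
  unfold bld
  rw [Matrix.of_apply, if_neg h1, if_neg h2, if_neg h3]

lemma AA_key (hT : IsSymplecticSet T) (u f : Idx p → Idx p → ℝ) (s s' : Idx p) :
    sg s * AA T u f s s' - sg s' * AA T u f s' s = sg s * sg s' * Qu T u s s' := by
  unfold AA
  rcases lt_trichotomy (ix s) (ix s') with hlt | heq | hgt
  · rw [if_pos hlt.le, if_neg (not_le.mpr hlt)]
    linear_combination (-(sg s * f s s')) * (sg_sq s')
  · have : s = s' := ix_inj heq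
    subst this
    rw [if_pos le_rfl]
    have hq : Qu T u s s = 0 := by
      have h2 := Q_antisym hT u s s
      have h2' : Qu T u s s = -Qu T u s s := h2
      linarith
    rw [hq]
    ring
  · rw [if_neg (not_le.mpr hgt), if_pos hgt.le]
    have ha : Qu T u s s' = -Qu T u s' s := Q_antisym hT u s s'
    linear_combination (sg s' * f s' s) * (sg_sq s) - (sg s * sg s') * ha

lemma bld_PP (hS : IsIsotropic S) (hT : IsSymplecticSet T) (hdisj : Disjoint S T)
    (u f : Idx p → Idx p → ℝ) : PP S T (bld S T u f) := by
  refine ⟨fun h h' hh' => bld_S h hh', fun h h' h1 h2 h3 => bld_fix h h1 h2 h3,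
    ?_, ?_, ?_, ?_⟩
  · intro h t ht h1
    rw [bld_T hdisj h ht, if_neg h1]
  · intro h s hs h1 h2
    rw [bld_mS hS hT hdisj h hs, if_neg h1, if_neg h2]
  · intro s t hs ht
    rw [bld_mS hS hT hdisj (Sum.swap t) hs, if_neg (fTS hdisj hT ht),
      if_pos (fTSw hT ht), bld_T hdisj s ht, if_pos hs, Sum.swap_swap, sg_swap]
    ring
  · intro s s' hs hs'
    rw [bld_mS hS hT hdisj s hs', if_pos hs, bld_mS hS hT hdisj s' hs, if_pos hs']
    have hsum : ∑ t ∈ T, sg t * bld S T u f s' (Sum.swap t) * bld S T u f s t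
        = Qu T u s s' := by
      refine Finset.sum_congr rfl fun t ht => ?_
      rw [bld_T hdisj s' (fTSw hT ht), if_pos hs', bld_T hdisj s ht, if_pos hs]
    rw [hsum]
    exact AA_key hT u f s s'

end Bld


noncomputable def crk (S T : Finset (Idx p)) (M : Matrix (Idx p) (Idx p) ℝ) (h s : Idx p) : ℝ :=
  ∑ t ∈ T, Int.fract (M h t) * (sg t * sg s * ((⌊M s (Sum.swap t)⌋ : ℤ) : ℝ))

noncomputable def uk (M : Matrix (Idx p) (Idx p) ℝ) (h t : Idx p) : ℝ := Int.fract (M h t)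
noncomputable def fk (S T : Finset (Idx p)) (M : Matrix (Idx p) (Idx p) ℝ) (h s : Idx p) : ℝ :=
  Int.fract (M h (Sum.swap s) - crk S T M h s)
noncomputable def ug (M : Matrix (Idx p) (Idx p) ℝ) (h t : Idx p) : ℝ := ((⌊M h t⌋ : ℤ) : ℝ)
noncomputable def fg (S T : Finset (Idx p)) (M : Matrix (Idx p) (Idx p) ℝ) (h s : Idx p) : ℝ :=
  ((⌊M h (Sum.swap s) - crk S T M h s⌋ : ℤ) : ℝ)

lemma sum_dd_right (f : Idx p → ℝ) (a : Idx p) : ∑ x, f x * dd x a = f a := by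
  simp only [dd, mul_ite, mul_one, mul_zero]
  rw [Finset.sum_ite_eq' Finset.univ a f, if_pos (Finset.mem_univ a)]

lemma factor_eq {S T : Finset (Idx p)} (hS : IsIsotropic S) (hT : IsSymplecticSet T)
    (hdisj : Disjoint S T) {M : Matrix (Idx p) (Idx p) ℝ} (hM : PP S T M) :
    M = bld S T (uk M) (fk S T M) * bld S T (ug M) (fg S T M) := by
  apply Matrix.ext
  intro h h'
  rw [Matrix.mul_apply]
  by_cases hb1 : h' ∈ S
  · have hsum : ∑ x, bld S T (uk M) (fk S T M) h x * bld S T (ug M) (fg S T M) x h'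
        = bld S T (uk M) (fk S T M) h h' := by
      rw [Finset.sum_congr rfl (fun x _ => by rw [bld_S x hb1] :
        ∀ x ∈ Finset.univ, bld S T (uk M) (fk S T M) h x * bld S T (ug M) (fg S T M) x h'
          = bld S T (uk M) (fk S T M) h x * dd x h')]
      exact sum_dd_right _ h'
    rw [hsum, bld_S h hb1]
    exact hM.1 h h' hb1
  by_cases hb2 : h' ∈ T
  · have hcol : ∀ x, bld S T (ug M) (fg S T M) x h'
        = if x ∈ S then ug M x h' else dd x h' := fun x => bld_T hdisj x hb2
    have hsplit := sum_split1
      (fun x => bld S T (uk M) (fk S T M) h x * bld S T (ug M) (fg S T M) x h') S h' hb1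
      (by
        intro x hx hne
        beta_reduce
        rw [hcol x, if_neg hx]
        unfold dd
        rw [if_neg hne]
        ring)
    rw [hsplit]
    beta_reduce
    have hg1 : bld S T (ug M) (fg S T M) h' h' = 1 := by
      rw [hcol h', if_neg hb1]
      unfold dd
      rw [if_pos rfl]
    have hS1 : ∑ σ ∈ S, bld S T (uk M) (fk S T M) h σ * bld S T (ug M) (fg S T M) σ h'
        = if h ∈ S then bld S T (ug M) (fg S T M) h h' else 0 := by
      rw [← sum_dd_left S (fun σ => bld S T (ug M) (fg S T M) σ h') h]
      exact Finset.sum_congr rfl fun σ hσ => by rw [bld_S h hσ]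
    rw [hg1, mul_one, hS1]
    by_cases hhS : h ∈ S
    · rw [if_pos hhS, bld_T hdisj h hb2, if_pos hhS, hcol h, if_pos hhS]
      unfold uk ug
      exact (Int.fract_add_floor _).symm
    · rw [if_neg hhS, add_zero, bld_T hdisj h hb2, if_neg hhS]
      exact hM.2.2.1 h h' hb2 hhS
  by_cases hb3 : Sum.swap h' ∈ S
  · obtain ⟨s, hs, rfl⟩ : ∃ s, s ∈ S ∧ h' = Sum.swap s :=
      ⟨Sum.swap h', hb3, (Sum.swap_swap h').symm⟩
    have hcol : ∀ x, bld S T (ug M) (fg S T M) x (Sum.swap s)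
        = if x ∈ S then AA T (ug M) (fg S T M) x s
          else if x ∈ T then sg x * sg s * ug M s (Sum.swap x)
          else dd x (Sum.swap s) := fun x => bld_mS hS hT hdisj x hs
    have hsplit := sum_split2
      (fun x => bld S T (uk M) (fk S T M) h x * bld S T (ug M) (fg S T M) x (Sum.swap s))
      S T (Sum.swap s) (fSw hS hs) (fSwT hdisj hT hs) hdisj
      (by
        intro x h1 h2 hne
        beta_reduce
        rw [hcol x, if_neg h1, if_neg h2]
        unfold dd
        rw [if_neg hne]
        ring)
    rw [hsplit]
    beta_reduce
    have hg1 : bld S T (ug M) (fg S T M) (Sum.swap s) (Sum.swap s) = 1 := by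
      rw [hcol _, if_neg (fSw hS hs), if_neg (fSwT hdisj hT hs)]
      unfold dd
      rw [if_pos rfl]
    have hS1 : ∑ σ ∈ S, bld S T (uk M) (fk S T M) h σ
          * bld S T (ug M) (fg S T M) σ (Sum.swap s)
        = if h ∈ S then bld S T (ug M) (fg S T M) h (Sum.swap s) else 0 := by
      rw [← sum_dd_left S (fun σ => bld S T (ug M) (fg S T M) σ (Sum.swap s)) h]
      exact Finset.sum_congr rfl fun σ hσ => by rw [bld_S h hσ]
    rw [hg1, mul_one, hS1]
    by_cases hhS : h ∈ S
    · rw [if_pos hhS]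
      have hTsum : ∑ t ∈ T, bld S T (uk M) (fk S T M) h t
            * bld S T (ug M) (fg S T M) t (Sum.swap s) = crk S T M h s := by
        refine Finset.sum_congr rfl fun t ht => ?_
        rw [bld_T hdisj h ht, if_pos hhS, hcol t, if_neg (fT hdisj ht), if_pos ht]
        rfl
      rw [hTsum, bld_mS hS hT hdisj h hs, if_pos hhS, hcol h, if_pos hhS]
      unfold AA
      by_cases hix : ix h ≤ ix s
      · rw [if_pos hix, if_pos hix]
        unfold fk fg
        have hfa := Int.fract_add_floor (M h (Sum.swap s) - crk S T M h s)
        linarith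
      · rw [if_neg hix, if_neg hix]
        have hfr : fk S T M s h + fg S T M s h = M s (Sum.swap h) - crk S T M s h := by
          unfold fk fg
          exact Int.fract_add_floor _
        have hQM := hM.2.2.2.2.2 s h hs hhS
        have hsplit2 : ∑ t ∈ T, sg t * M h (Sum.swap t) * M s t
            = Qu T (uk M) s h + Qu T (ug M) s h + sg h * crk S T M s h
              - sg s * crk S T M h s := by
          have hterm : ∀ t ∈ T, sg t * M h (Sum.swap t) * M s t
              = sg t * uk M h (Sum.swap t) * uk M s t
                + sg t * ug M h (Sum.swap t) * ug M s t
                + Int.fract (M s t) * (sg t * sg h * ug M h (Sum.swap t)) * sg h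
                + sg t * Int.fract (M h (Sum.swap t)) * ug M s t := by
            intro t ht
            have h1 : Int.fract (M h (Sum.swap t)) = M h (Sum.swap t) - ⌊M h (Sum.swap t)⌋ := rfl
            have h2 : Int.fract (M s t) = M s t - ⌊M s t⌋ := rfl
            unfold uk ug
            rw [h1, h2]
            linear_combination (-(sg t * (M s t - ((⌊M s t⌋ : ℤ) : ℝ))
              * ((⌊M h (Sum.swap t)⌋ : ℤ) : ℝ))) * (sg_sq h)
          rw [Finset.sum_congr rfl hterm]
          rw [Finset.sum_add_distrib, Finset.sum_add_distrib, Finset.sum_add_distrib]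
          have h3 : ∑ x ∈ T, Int.fract (M s x) * (sg x * sg h * ug M h (Sum.swap x)) * sg h
              = sg h * ∑ t ∈ T, Int.fract (M s t)
                  * (sg t * sg h * ((⌊M h (Sum.swap t)⌋ : ℤ) : ℝ)) := by
            rw [Finset.mul_sum]
            exact Finset.sum_congr rfl fun t _ => by unfold ug; ring
          have hD : ∑ t ∈ T, sg t * Int.fract (M h (Sum.swap t)) * ug M s t
              = - (sg s * ∑ t ∈ T, Int.fract (M h t)
                    * (sg t * sg s * ((⌊M s (Sum.swap t)⌋ : ℤ) : ℝ))) := by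
            rw [Finset.mul_sum, ← Finset.sum_neg_distrib]
            rw [sumT hT (fun t => sg t * Int.fract (M h (Sum.swap t)) * ug M s t)]
            refine Finset.sum_congr rfl fun t ht => ?_
            rw [sg_swap, Sum.swap_swap]
            unfold ug
            linear_combination (Int.fract (M h t) * ((⌊M s (Sum.swap t)⌋ : ℤ) : ℝ) * sg t) * (sg_sq s)
          rw [hD, h3]
          unfold Qu crk
          ring
        linear_combination (-(sg h * sg s)) * hfr - sg s * hsplit2 - sg h * hQM
          - (M h (Sum.swap s) + sg s * (∑ t ∈ T, sg t * M h (Sum.swap t) * M s t)) * (sg_sq h)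
          + (crk S T M h s) * (sg_sq s)
    · rw [if_neg hhS]
      have hk1 : ∀ t ∈ T, bld S T (uk M) (fk S T M) h t = dd h t := fun t ht => by
        rw [bld_T hdisj h ht, if_neg hhS]
      by_cases hhT : h ∈ T
      · have hTsum : ∑ t ∈ T, bld S T (uk M) (fk S T M) h t
              * bld S T (ug M) (fg S T M) t (Sum.swap s)
            = bld S T (ug M) (fg S T M) h (Sum.swap s) := by
          rw [Finset.sum_congr rfl (fun t ht => by rw [hk1 t ht] :
            ∀ t ∈ T, bld S T (uk M) (fk S T M) h t
                * bld S T (ug M) (fg S T M) t (Sum.swap s)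
              = dd h t * bld S T (ug M) (fg S T M) t (Sum.swap s))]
          rw [sum_dd_left T (fun t => bld S T (ug M) (fg S T M) t (Sum.swap s)) h,
            if_pos hhT]
        rw [hTsum, hcol h, if_neg hhS, if_pos hhT,
          bld_mS hS hT hdisj h hs, if_neg hhS, if_pos hhT]
        have h5 := PP.p5' hT hM hs hhT
        rw [h5]
        unfold uk ug
        linear_combination (-(sg h * sg s)) * (Int.fract_add_floor (M s (Sum.swap h)))
      · have hTsum : ∑ t ∈ T, bld S T (uk M) (fk S T M) h t
              * bld S T (ug M) (fg S T M) t (Sum.swap s) = 0 := by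
          rw [Finset.sum_congr rfl (fun t ht => by rw [hk1 t ht] :
            ∀ t ∈ T, bld S T (uk M) (fk S T M) h t
                * bld S T (ug M) (fg S T M) t (Sum.swap s)
              = dd h t * bld S T (ug M) (fg S T M) t (Sum.swap s))]
          rw [sum_dd_left T (fun t => bld S T (ug M) (fg S T M) t (Sum.swap s)) h,
            if_neg hhT]
        rw [hTsum, add_zero, add_zero, bld_mS hS hT hdisj h hs, if_neg hhS, if_neg hhT]
        exact hM.2.2.2.1 h s hs hhS hhT
  · have hsum : ∑ x, bld S T (uk M) (fk S T M) h x * bld S T (ug M) (fg S T M) x h'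
        = bld S T (uk M) (fk S T M) h h' := by
      rw [Finset.sum_congr rfl (fun x _ => by rw [bld_fix x hb1 hb2 hb3] :
        ∀ x ∈ Finset.univ, bld S T (uk M) (fk S T M) h x * bld S T (ug M) (fg S T M) x h'
          = bld S T (uk M) (fk S T M) h x * dd x h')]
      exact sum_dd_right _ h'
    rw [hsum, bld_fix h hb1 hb2 hb3]
    exact hM.2.1 h h' hb1 hb2 hb3


lemma bld_g_int {S T : Finset (Idx p)} (M : Matrix (Idx p) (Idx p) ℝ) (i j : Idx p) :
    ∃ n : ℤ, bld S T (ug M) (fg S T M) i j = (n : ℝ) := by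
  have key : bld S T (ug M) (fg S T M) i j ∈ (Int.castRingHom ℝ).range := by
    have hdd : ∀ a b : Idx p, dd a b ∈ (Int.castRingHom ℝ).range := fun a b => by
      unfold dd; split
      · exact ⟨1, by norm_num⟩
      · exact ⟨0, by norm_num⟩
    have hsg : ∀ x : Idx p, sg x ∈ (Int.castRingHom ℝ).range := fun x => by
      cases x
      · exact ⟨1, by norm_num [sg]⟩
      · exact ⟨-1, by norm_num [sg]⟩
    have hug : ∀ a b : Idx p, ug M a b ∈ (Int.castRingHom ℝ).range :=
      fun a b => ⟨⌊M a b⌋, rfl⟩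
    have hfg : ∀ a b : Idx p, fg S T M a b ∈ (Int.castRingHom ℝ).range :=
      fun a b => ⟨⌊M a (Sum.swap b) - crk S T M a b⌋, rfl⟩
    have hQu : ∀ a b : Idx p, Qu T (ug M) a b ∈ (Int.castRingHom ℝ).range := by
      intro a b
      unfold Qu
      exact Subring.sum_mem _ fun t _ =>
        mul_mem (mul_mem (hsg t) (hug b (Sum.swap t))) (hug a t)
    unfold bld
    rw [Matrix.of_apply]
    split
    · exact hdd _ _
    split
    · split
      · exact hug _ _
      · exact hdd _ _
    split
    · split
      · unfold AA
        split
        · exact hfg _ _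
        · exact sub_mem (mul_mem (mul_mem (hsg _) (hsg _)) (hfg _ _))
            (mul_mem (hsg _) (hQu _ _))
      split
      · exact mul_mem (mul_mem (hsg _) (hsg _)) (hug _ _)
      · exact hdd _ _
    · exact hdd _ _
  obtain ⟨n, hn⟩ := key
  exact ⟨n, hn.symm⟩

lemma bld_k_bound {S T : Finset (Idx p)} (M : Matrix (Idx p) (Idx p) ℝ) (i j : Idx p) :
    |bld S T (uk M) (fk S T M) i j| ≤ 2 * (p : ℝ) + 2 := by
  have h0 : (0 : ℝ) ≤ (p : ℝ) := Nat.cast_nonneg p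
  have hcard : (T.card : ℝ) ≤ 2 * (p : ℝ) := by
    have h1 : T.card ≤ Fintype.card (Idx p) := Finset.card_le_univ T
    have h2 : Fintype.card (Idx p) = p + p := by
      simp [Fintype.card_sum]
    rw [h2] at h1
    have := (Nat.cast_le (α := ℝ)).mpr h1
    push_cast at this
    linarith
  have hdd : ∀ a b : Idx p, |dd a b| ≤ 1 := fun a b => by
    unfold dd; split <;> norm_num
  have huk : ∀ a b : Idx p, |uk M a b| ≤ 1 := fun a b => by
    unfold uk
    rw [abs_le]
    constructor
    · linarith [Int.fract_nonneg (M a b)]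
    · linarith [Int.fract_lt_one (M a b)]
  have hfk : ∀ a b : Idx p, |fk S T M a b| ≤ 1 := fun a b => by
    unfold fk
    rw [abs_le]
    constructor
    · linarith [Int.fract_nonneg (M a (Sum.swap b) - crk S T M a b)]
    · linarith [Int.fract_lt_one (M a (Sum.swap b) - crk S T M a b)]
  have hQu : ∀ a b : Idx p, |Qu T (uk M) a b| ≤ 2 * (p : ℝ) := by
    intro a b
    unfold Qu
    calc |∑ t ∈ T, sg t * uk M b (Sum.swap t) * uk M a t|
        ≤ ∑ t ∈ T, |sg t * uk M b (Sum.swap t) * uk M a t| :=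
          Finset.abs_sum_le_sum_abs _ _
      _ ≤ ∑ _t ∈ T, (1 : ℝ) := by
          refine Finset.sum_le_sum fun t _ => ?_
          rw [abs_mul, abs_mul, abs_sg, one_mul]
          have h1 := huk b (Sum.swap t)
          have h2 := huk a t
          nlinarith [abs_nonneg (uk M b (Sum.swap t)), abs_nonneg (uk M a t)]
      _ = (T.card : ℝ) := by rw [Finset.sum_const, nsmul_eq_mul, mul_one]
      _ ≤ 2 * (p : ℝ) := hcard
  have habs_sub : ∀ x y : ℝ, |x - y| ≤ |x| + |y| := fun x y => by
    rw [sub_eq_add_neg]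
    exact (abs_add_le _ _).trans (by rw [abs_neg])
  unfold bld
  rw [Matrix.of_apply]
  split
  · linarith [hdd i j]
  split
  · split
    · linarith [huk i j]
    · linarith [hdd i j]
  split
  · split
    · unfold AA
      split
      · linarith [hfk i (Sum.swap j)]
      · calc |sg i * sg (Sum.swap j) * fk S T M (Sum.swap j) i
              - sg (Sum.swap j) * Qu T (uk M) (Sum.swap j) i|
            ≤ |sg i * sg (Sum.swap j) * fk S T M (Sum.swap j) i|
              + |sg (Sum.swap j) * Qu T (uk M) (Sum.swap j) i| := habs_sub _ _
          _ ≤ 2 * (p : ℝ) + 2 := by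
              rw [abs_mul, abs_mul, abs_mul, abs_sg, abs_sg]
              have := hfk (Sum.swap j) i
              have := hQu (Sum.swap j) i
              linarith
    split
    · rw [abs_mul, abs_mul, abs_sg, abs_sg, one_mul, one_mul]
      linarith [huk (Sum.swap j) (Sum.swap i)]
    · linarith [hdd i j]
  · linarith [hdd i j]

end NZaux

/-- `N_{S,T}(ℤ)` is cocompact in `N_{S,T}(ℝ)`: there is a compact set `K`
of `2p×2p` real matrices such that every `M ∈ N_{S,T}(ℝ)` factors as `M = k·γ` with
`k ∈ K ∩ N_{S,T}(ℝ)` and `γ` an integer matrix lying in `N_{S,T}(ℝ)`. -/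
theorem NZ_cocompact_in_NR (p : ℕ) (hp : 1 ≤ p) (S T : Finset (Idx p))
    (hdisj : Disjoint S T) (hS : IsIsotropic S) (hT : IsSymplecticSet T) :
    ∃ K : Set (Matrix (Idx p) (Idx p) ℝ), IsCompact K ∧
      ∀ M ∈ NR p S T, ∃ k ∈ K ∩ NR p S T, ∃ γ : Matrix (Idx p) (Idx p) ℤ,
        (γ.map (Int.cast : ℤ → ℝ)) ∈ NR p S T ∧ M = k * γ.map (Int.cast : ℤ → ℝ) := by
  classical
  open NZaux in
  refine ⟨(Set.univ.pi fun _ : Idx p => Set.univ.pi fun _ : Idx p =>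
      Set.Icc (-(2 * (p : ℝ) + 2)) (2 * (p : ℝ) + 2) :
      Set ((Idx p) → (Idx p) → ℝ)), ?_, ?_⟩
  · exact isCompact_univ_pi fun _ => isCompact_univ_pi fun _ => isCompact_Icc
  · intro M hM
    have hPP := NZaux.NR_imp_PP hS hT hdisj hM
    have hkPP := NZaux.bld_PP hS hT hdisj (NZaux.uk M) (NZaux.fk S T M)
    have hgPP := NZaux.bld_PP hS hT hdisj (NZaux.ug M) (NZaux.fg S T M)
    choose n hn using NZaux.bld_g_int (S := S) (T := T) M
    have hmap : (Matrix.of n).map (Int.cast : ℤ → ℝ)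
        = NZaux.bld S T (NZaux.ug M) (NZaux.fg S T M) := by
      apply Matrix.ext
      intro i j
      rw [Matrix.map_apply, Matrix.of_apply]
      exact (hn i j).symm
    refine ⟨NZaux.bld S T (NZaux.uk M) (NZaux.fk S T M),
      ⟨?_, NZaux.PP_imp_NR hS hT hdisj hkPP⟩, Matrix.of n, ?_, ?_⟩
    · refine Set.mem_univ_pi.mpr ?_
      intro i
      rw [Set.mem_univ_pi]
      intro j
      rw [Set.mem_Icc, ← abs_le]
      exact NZaux.bld_k_bound M i j
    · rw [hmap]
      exact NZaux.PP_imp_NR hS hT hdisj hgPP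
    · rw [hmap]
      exact NZaux.factor_eq hS hT hdisj hPP
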